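/- arXiv:1307.4471 — 2 statements merged into one kernel-verified Lean document; each statement's English description precedes it below -/
import Mathlib

section
/- Let u, v be nodes on level i of the pruned run DAG G' and u', v' nodes on level i+1 of G'. If (u,u') ∈ E', (v,v') ∈ E', and u' ≈_{i+1} v' (i.e., h_{u'} = h_{v'}), then u ≈_i v (i.e., h_u = h_v). -/
/-!
Profile trees for Büchi determinization (Fisman–Kupferman–Vardi–Wilke style profiles).
Common definitions: nondeterministic Büchi word automata (NBW), the run DAG `G`,
profiles of nodes, and the pruned run DAG `G'`.
-/

/-- A nondeterministic Büchi word automaton `A = (Alph, Q, Qin, ρ, F)` with `Qin ∩ F = ∅`. -/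
structure NBW (Alph Q : Type*) where
  Qin : Set Q
  ρ : Q → Alph → Set Q
  F : Set Q
  disj : Qin ∩ F = ∅

variable {Alph Q : Type*} (A : NBW Alph Q) (w : ℕ → Alph)

/-- Lexicographic order `L₁ ≤ L₂` on profiles (lists over ℕ). -/
def lexLE (L₁ L₂ : List ℕ) : Prop :=
  List.Lex (· < ·) L₁ L₂ ∨ L₁ = L₂

/-- Strict lexicographic order `L₁ < L₂` on profiles. -/
def lexLT (L₁ L₂ : List ℕ) : Prop :=
  List.Lex (· < ·) L₁ L₂

open Classical in
/-- The profiles of all finite initial runs of `A` (on `w`) to the node `v = (q, i)`: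
for each run `p₀,…,p_i` with `p₀ ∈ Qin`, `p_{j+1} ∈ ρ(p_j, w_j)` and `p_i = q`, the
sequence of `F`-visitation labels `f(p₀,0) ⋯ f(p_i,i)` (where `f` is 1 on `F`-nodes, else 0). -/
def runProfiles (v : Q × ℕ) : Set (List ℕ) :=
  { L | ∃ p : ℕ → Q, p 0 ∈ A.Qin ∧ (∀ j < v.2, p (j + 1) ∈ A.ρ (p j) (w j)) ∧
        p v.2 = v.1 ∧ L = (List.range (v.2 + 1)).map (fun j => if p j ∈ A.F then 1 else 0) }

/-- `v` is a node of the run DAG `G = (V, E)` (equivalently of the pruned DAG `G'`):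
there is a finite run of `A` to `v.1` on `w₀ ⋯ w_{v.2 - 1}`. -/
def memV (v : Q × ℕ) : Prop := (runProfiles A w v).Nonempty

/-- `L` is the lexicographically maximal profile among all initial paths to `v`. -/
def IsMaxProfile (v : Q × ℕ) (L : List ℕ) : Prop :=
  L ∈ runProfiles A w v ∧ ∀ L' ∈ runProfiles A w v, lexLE L' L

open Classical in
/-- The profile `h_v` of a node `v`: the lexicographically maximal profile of an
initial path to `v` (junk value `[]` if `v` is not a node of the DAG). -/
noncomputable def profile (v : Q × ℕ) : List ℕ :=
  if h : ∃ L, IsMaxProfile A w v L then h.choose else []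

/-- The edge relation `E` of the run DAG `G`: `E((q,i), (q',i+1))` iff `(q,i) ∈ V`
and `q' ∈ ρ(q, w_i)`. -/
def edgeG (u v : Q × ℕ) : Prop :=
  memV A w u ∧ v.2 = u.2 + 1 ∧ v.1 ∈ A.ρ u.1 (w u.2)

/-- The edge relation `E'` of the pruned run DAG `G'`: `(u,v) ∈ E` and every
`E`-parent `u'` of `v` satisfies `h_{u'} ≤ h_u`. -/
def edgeG' (u v : Q × ℕ) : Prop :=
  edgeG A w u v ∧ ∀ u', edgeG A w u' v → lexLE (profile A w u') (profile A w u)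

/-! ### Auxiliary lemmas -/

lemma lexLE_trans {a b c : List ℕ} (h1 : lexLE a b) (h2 : lexLE b c) : lexLE a c := by
  rcases h1 with h1 | rfl
  · rcases h2 with h2 | rfl
    · exact Or.inl (lt_trans (α := List ℕ) h1 h2)
    · exact Or.inl h1
  · exact h2

lemma lexLE_antisymm {a b : List ℕ} (h1 : lexLE a b) (h2 : lexLE b a) : a = b := by
  rcases h1 with h1 | rfl
  · rcases h2 with h2 | rfl
    · exact absurd h2 (asymm_of (List.Lex (· < ·)) h1)
    · rfl
  · rfl

lemma lex_append : ∀ {K M : List ℕ}, List.Lex (· < ·) K M → K.length = M.length →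
    ∀ T T' : List ℕ, List.Lex (· < ·) (K ++ T) (M ++ T') := by
  intro K M h
  induction h with
  | nil => intro hlen; simp at hlen
  | rel hab => intro _ T T'; exact List.Lex.rel hab
  | cons h ih => intro hlen T T'; exact List.Lex.cons (ih (by simpa using hlen) T T')

lemma runProfiles_length {v : Q × ℕ} {L : List ℕ} (h : L ∈ runProfiles A w v) :
    L.length = v.2 + 1 := by
  obtain ⟨p, -, -, -, rfl⟩ := h
  simp

lemma runProfiles_finite (v : Q × ℕ) : (runProfiles A w v).Finite := by
  classical
  apply Set.Finite.subset (Set.finite_range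
    (fun g : Fin (v.2 + 1) → Bool =>
      (List.range (v.2 + 1)).map
        (fun j => if h : j < v.2 + 1 then (if g ⟨j, h⟩ then 1 else 0) else 0)))
  rintro L ⟨p, -, -, -, rfl⟩
  refine ⟨fun k => decide (p k.1 ∈ A.F), ?_⟩
  refine List.map_congr_left ?_
  intro j hj
  rw [List.mem_range] at hj
  simp [hj]

lemma exists_isMaxProfile {v : Q × ℕ} (hv : memV A w v) : ∃ L, IsMaxProfile A w v L := by
  have hfin := runProfiles_finite A w v
  obtain ⟨L, hL, hmax⟩ := hfin.toFinset.exists_max_image id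
    (by rwa [Set.Finite.toFinset_nonempty])
  rw [Set.Finite.mem_toFinset] at hL
  refine ⟨L, hL, fun L' hL' => ?_⟩
  have hle : L' ≤ L := hmax L' (hfin.mem_toFinset.2 hL')
  rcases lt_or_eq_of_le hle with h | h
  · exact Or.inl h
  · exact Or.inr h

lemma profile_isMax {v : Q × ℕ} (hv : memV A w v) :
    IsMaxProfile A w v (profile A w v) := by
  have h : ∃ L, IsMaxProfile A w v L := exists_isMaxProfile A w hv
  rw [profile, dif_pos h]
  exact h.choose_spec

lemma profile_eq_of_isMax {v : Q × ℕ} {L : List ℕ} (h : IsMaxProfile A w v L) :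
    profile A w v = L := by
  have hv : memV A w v := ⟨L, h.1⟩
  exact lexLE_antisymm (h.2 _ (profile_isMax A w hv).1) ((profile_isMax A w hv).2 _ h.1)

open Classical in
lemma profile_child {u u' : Q × ℕ} (he : edgeG' A w u u') :
    profile A w u' = profile A w u ++ [if u'.1 ∈ A.F then 1 else 0] := by
  obtain ⟨⟨hu, hlev, hρ⟩, hprune⟩ := he
  set n := u.2 with hn
  have hmaxu := profile_isMax A w hu
  obtain ⟨p, hp0, hpstep, hpn, hpL⟩ := hmaxu.1
  apply profile_eq_of_isMax
  constructor
  · refine ⟨fun j => if j ≤ n then p j else u'.1, by simpa using hp0, ?_, ?_, ?_⟩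
    · intro j hj
      rw [hlev] at hj
      rcases Nat.lt_or_ge j n with h | h
      · have h1 : j ≤ n := le_of_lt h
        have h2 : j + 1 ≤ n := h
        simp only [if_pos h1, if_pos h2]
        exact hpstep j h
      · have hjn : j = n := le_antisymm (Nat.lt_succ_iff.1 hj) h
        rw [hjn]
        simp only [if_pos (le_refl n), if_neg (by omega : ¬ n + 1 ≤ n)]
        rw [hn, hpn]
        exact hρ
    · simp [hlev, (by omega : ¬ n + 1 ≤ n)]
    · rw [hlev, show n + 1 + 1 = (n + 1) + 1 from rfl, List.range_succ, List.map_append]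
      congr 1
      · rw [hpL]
        refine List.map_congr_left ?_
        intro j hj
        rw [List.mem_range, Nat.lt_succ_iff] at hj
        simp [show j ≤ n from hj]
      · simp [(by omega : ¬ n + 1 ≤ n)]
  · rintro L' ⟨q, hq0, hqstep, hqn, rfl⟩
    have hq1 : q (n + 1) = u'.1 := by rw [← hlev]; exact hqn
    have hK : (List.range (n + 1)).map (fun j => if q j ∈ A.F then 1 else 0)
        ∈ runProfiles A w (q n, n) :=
      ⟨q, hq0, fun j hj => hqstep j (by rw [hlev]; omega), rfl, rfl⟩
    have hedge : edgeG A w (q n, n) u' := by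
      refine ⟨⟨_, hK⟩, by simpa using hlev, ?_⟩
      have hst := hqstep n (by rw [hlev]; omega)
      rw [hq1] at hst
      exact hst
    have h1 : lexLE (profile A w (q n, n)) (profile A w u) := hprune _ hedge
    have h2 : lexLE ((List.range (n + 1)).map (fun j => if q j ∈ A.F then 1 else 0))
        (profile A w (q n, n)) := (profile_isMax A w ⟨_, hK⟩).2 _ hK
    have h3 := lexLE_trans h2 h1
    have hL'eq : (List.range (u'.2 + 1)).map (fun j => if q j ∈ A.F then 1 else 0)
        = (List.range (n + 1)).map (fun j => if q j ∈ A.F then 1 else 0)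
          ++ [if u'.1 ∈ A.F then 1 else 0] := by
      rw [hlev, show n + 1 + 1 = (n + 1) + 1 from rfl, List.range_succ, List.map_append]
      congr 1
      simp [hq1]
    rw [hL'eq]
    rcases h3 with h3 | h3
    · refine Or.inl (lex_append h3 ?_ _ _)
      rw [runProfiles_length A w hK, runProfiles_length A w (profile_isMax A w hu).1]
    · rw [h3]
      exact Or.inr rfl

/-- Lemma: equivalent children have equivalent parents in `G'`.
If `u, v` are nodes on level `i` of `G'`, `u', v'` are nodes on level `i+1`,
`(u,u') ∈ E'`, `(v,v') ∈ E'`, and `h_{u'} = h_{v'}`, then `h_u = h_v`. -/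
theorem parents_equiv_of_children_equiv [Fintype Alph] [Fintype Q]
    (A : NBW Alph Q) (w : ℕ → Alph) (i : ℕ) (u v u' v' : Q × ℕ)
    (hu : memV A w u) (hv : memV A w v) (hu' : memV A w u') (hv' : memV A w v')
    (hui : u.2 = i) (hvi : v.2 = i) (hui' : u'.2 = i + 1) (hvi' : v'.2 = i + 1)
    (he : edgeG' A w u u') (he' : edgeG' A w v v')
    (heq : profile A w u' = profile A w v') :
    profile A w u = profile A w v := by
  have h1 := profile_child A w he
  have h2 := profile_child A w he'
  rw [h1, h2] at heq
  exact List.append_inj_left' heq rfl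
end

section
/- For classes U and W on the same level i of the profile tree T: if U is a descendant of first(gl(W)), then W ≼_i U (i.e., h_W ≤ h_U). Consequently, if U ≺_i W then U is not a descendant of first(gl(W)). -/
variable {Alph Q : Type*} (A : NBW Alph Q) (w : ℕ → Alph)

/-- The equivalence class (under equality of profiles, levelwise) of a node `u` of `G'`. -/
def classOf (u : Q × ℕ) : Set (Q × ℕ) :=
  { v | memV A w v ∧ v.2 = u.2 ∧ profile A w v = profile A w u }

/-- `C` is a class (node) of the profile tree `T` on level `i`. -/
def ClassAt (C : Set (Q × ℕ)) (i : ℕ) : Prop :=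
  ∃ u, memV A w u ∧ u.2 = i ∧ C = classOf A w u

/-- The child relation of the profile tree `T`: `[v]` is a child of `[u]`
whenever `(u, v) ∈ E'`. -/
def childC (C D : Set (Q × ℕ)) : Prop :=
  ∃ u v, edgeG' A w u v ∧ memV A w v ∧ C = classOf A w u ∧ D = classOf A w v

/-- `D` is a descendant of `C` in `T`: there is a (possibly empty) path from `C` to `D`. -/
def DescC : Set (Q × ℕ) → Set (Q × ℕ) → Prop := Relation.ReflTransGen (childC A w)

/-- `C` is an `F`-class: all its members are `F`-nodes. -/
def IsFClass (C : Set (Q × ℕ)) : Prop := ∀ v ∈ C, v.1 ∈ A.F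

/-- `h_C ≤ h_D` for classes `C`, `D` (members of a class all share one profile). -/
def profLE (C D : Set (Q × ℕ)) : Prop :=
  ∀ u ∈ C, ∀ v ∈ D, lexLE (profile A w u) (profile A w v)

/-- `h_C < h_D` for classes `C`, `D`. -/
def profLT (C D : Set (Q × ℕ)) : Prop :=
  ∀ u ∈ C, ∀ v ∈ D, lexLT (profile A w u) (profile A w v)

/-- `C` (a class on level `i`) is before `D` (a class on level `j`):
`i < j`, or `i = j` and `h_C < h_D`. -/
def BeforeC (C : Set (Q × ℕ)) (i : ℕ) (D : Set (Q × ℕ)) (j : ℕ) : Prop :=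
  i < j ∨ (i = j ∧ profLT A w C D)

/-- `C` (on level `i`) is `first(m)` for the labeling `gl`: the first class
(in the `before` order) labeled `m`. -/
def IsFirst (gl : Set (Q × ℕ) → ℕ) (m : ℕ) (C : Set (Q × ℕ)) (i : ℕ) : Prop :=
  ClassAt A w C i ∧ gl C = m ∧
    ∀ D j, ClassAt A w D j → gl D = m → ¬ BeforeC A w D j C i

/-- `C` is a descendant of `first(m)` (for the labeling `gl`). -/
def DescFirst (gl : Set (Q × ℕ) → ℕ) (m : ℕ) (C : Set (Q × ℕ)) : Prop :=
  ∃ Fm j, IsFirst A w gl m Fm j ∧ DescC A w Fm C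

/-- `C = lmd(m, i)` for the labeling `gl`: `C` is the class of lexicographically
minimal profile among the descendants of `first(m)` on level `i`. -/
def IsLmd (gl : Set (Q × ℕ) → ℕ) (m i : ℕ) (C : Set (Q × ℕ)) : Prop :=
  ClassAt A w C i ∧ DescFirst A w gl m C ∧
    ∀ D, ClassAt A w D i → DescFirst A w gl m D → profLE A w C D

/-- `gl` is the global labeling of the profile tree `T`:
`gl(U₀) = 0` for the level-0 class; for every class `U` on level `i`,
if `labels(U) = {m ∣ U = lmd(m,i)}` is nonempty then `gl(U) = min(labels(U))`,
and otherwise `gl(U) = 1 + max{gl(W) ∣ W before U}`. -/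
def GlSpec (gl : Set (Q × ℕ) → ℕ) : Prop :=
  (∀ C, ClassAt A w C 0 → gl C = 0) ∧
  ∀ C i, ClassAt A w C i →
    ((∃ m, IsLmd A w gl m i C) →
        IsLmd A w gl (gl C) i C ∧ ∀ m, IsLmd A w gl m i C → gl C ≤ m) ∧
    ((¬ ∃ m, IsLmd A w gl m i C) →
        (∃ D j, ClassAt A w D j ∧ BeforeC A w D j C i ∧ gl C = gl D + 1) ∧
        ∀ D j, ClassAt A w D j → BeforeC A w D j C i → gl D < gl C)


section Aux

variable {Alph Q : Type*} (A : NBW Alph Q) (w : ℕ → Alph)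

lemma lexLT_asymm {L M : List ℕ} (h : lexLT L M) (h2 : lexLE M L) : False := by
  rcases h2 with h2 | rfl
  · exact (List.Lex.asymm (· < · : ℕ → ℕ → Prop)).asymm _ _ h h2
  · exact (List.Lex.asymm (· < · : ℕ → ℕ → Prop)).asymm _ _ h h

lemma lex_trichot {L M : List ℕ} (h : ¬ lexLT L M) (h2 : ¬ lexLT M L) : L = M := by
  exact (List.Lex.trichotomous (· < · : ℕ → ℕ → Prop)).trichotomous L M h h2

lemma self_mem_classOf {u : Q × ℕ} (h : memV A w u) : u ∈ classOf A w u := ⟨h, rfl, rfl⟩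

lemma classAt_level_eq' {C : Set (Q × ℕ)} {i j : ℕ}
    (hi : ClassAt A w C i) (hj : ClassAt A w C j) : i = j := by
  obtain ⟨u, hu, hui, rfl⟩ := hi
  obtain ⟨v, hv, hvj, hC⟩ := hj
  have hmem : u ∈ classOf A w v := hC ▸ self_mem_classOf A w hu
  rw [← hui, ← hvj, hmem.2.1]

lemma childC_levels {C D : Set (Q × ℕ)} (h : childC A w C D) :
    ∃ k, ClassAt A w C k ∧ ClassAt A w D (k + 1) := by
  obtain ⟨u, v, he, hv, rfl, rfl⟩ := h
  exact ⟨u.2, ⟨u, he.1.1, rfl, rfl⟩, ⟨v, hv, he.1.2.1, rfl⟩⟩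

lemma descC_level_le {C D : Set (Q × ℕ)} (h : DescC A w C D) :
    ∀ i, ClassAt A w C i → ∀ j, ClassAt A w D j → i ≤ j := by
  induction h using Relation.ReflTransGen.head_induction_on with
  | refl => intro i hi j hj; exact (classAt_level_eq' A w hi hj).le
  | head hac hcb ih =>
    intro i hi j hj
    obtain ⟨k, hk1, hk2⟩ := childC_levels A w hac
    have hik : i = k := classAt_level_eq' A w hi hk1
    have := ih (k + 1) hk2 j hj
    omega

lemma descC_eq_of_level {C D : Set (Q × ℕ)} {i : ℕ} (h : DescC A w C D)
    (hi : ClassAt A w C i) (hj : ClassAt A w D i) : C = D := by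
  rcases (Relation.ReflTransGen.cases_head h) with h | ⟨c, hac, hcb⟩
  · exact h
  · obtain ⟨k, hk1, hk2⟩ := childC_levels A w hac
    have hik : i = k := classAt_level_eq' A w hi hk1
    have := descC_level_le A w hcb (k + 1) hk2 i hj
    omega

lemma profLT_iff {a b : Q × ℕ} (ha : memV A w a) (hb : memV A w b) :
    profLT A w (classOf A w a) (classOf A w b) ↔ lexLT (profile A w a) (profile A w b) := by
  constructor
  · intro h
    exact h a (self_mem_classOf A w ha) b (self_mem_classOf A w hb)
  · intro h u hu v hv
    rw [hu.2.2, hv.2.2]; exact h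

lemma profLE_of_profile_le {a b : Q × ℕ}
    (h : lexLE (profile A w a) (profile A w b)) :
    profLE A w (classOf A w a) (classOf A w b) := by
  intro u hu v hv
  rw [hu.2.2, hv.2.2]; exact h

lemma classOf_eq_of_profile_eq {a b : Q × ℕ} (hlev : a.2 = b.2)
    (hp : profile A w a = profile A w b) : classOf A w a = classOf A w b := by
  ext x
  constructor <;> intro ⟨h1, h2, h3⟩
  · exact ⟨h1, h2.trans hlev, h3.trans hp⟩
  · exact ⟨h1, h2.trans hlev.symm, h3.trans hp.symm⟩

end Aux

/-- for classes `U`, `W` on level `i`, if `U` is a descendant of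
`first(gl(W))` then `W ≼_i U`; consequently if `U ≺_i W` then `U` is not a descendant
of `first(gl(W))`. -/
theorem desc_of_first_implies_ge [Fintype Alph] [Fintype Q]
    (A : NBW Alph Q) (w : ℕ → Alph) (gl : Set (Q × ℕ) → ℕ) (hgl : GlSpec A w gl)
    (i : ℕ) (U W : Set (Q × ℕ)) (hU : ClassAt A w U i) (hW : ClassAt A w W i) :
    (∀ Fm j, IsFirst A w gl (gl W) Fm j → DescC A w Fm U → profLE A w W U) ∧
    (profLT A w U W → ∀ Fm j, IsFirst A w gl (gl W) Fm j → ¬ DescC A w Fm U) := by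
  have main : ∀ Fm j, IsFirst A w gl (gl W) Fm j → DescC A w Fm U → profLE A w W U := by
    intro Fm j hFirst hDesc
    by_cases hex : ∃ m, IsLmd A w gl m i W
    · have hlmd := ((hgl.2 W i hW).1 hex).1
      exact hlmd.2.2 U hU ⟨Fm, j, hFirst, hDesc⟩
    · have hmax := ((hgl.2 W i hW).2 hex).2
      obtain ⟨hFmCl, hFmgl, hmin⟩ := hFirst
      have h1 : ¬ BeforeC A w Fm j W i := fun hb => by
        have := hmax Fm j hFmCl hb; omega
      have h2 : ¬ BeforeC A w W i Fm j := hmin W i hW rfl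
      -- conclude j = i and profiles of Fm and W are equal
      obtain ⟨a, ha, haj, hFmC⟩ := hFmCl
      obtain ⟨b, hb, hbi, hWC⟩ := id hW
      have hji : j = i := by
        rcases Nat.lt_trichotomy j i with h | h | h
        · exact absurd (Or.inl h) h1
        · exact h
        · exact absurd (Or.inl h) h2
      have hnlt1 : ¬ lexLT (profile A w a) (profile A w b) := by
        intro hlt
        exact h1 (Or.inr ⟨hji, by
          rw [hFmC, hWC]; exact (profLT_iff A w ha hb).2 hlt⟩)
      have hnlt2 : ¬ lexLT (profile A w b) (profile A w a) := by
        intro hlt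
        exact h2 (Or.inr ⟨hji.symm, by
          rw [hFmC, hWC]; exact (profLT_iff A w hb ha).2 hlt⟩)
      have hpeq : profile A w a = profile A w b := lex_trichot hnlt1 hnlt2
      have hFmW : Fm = W := by
        rw [hFmC, hWC]
        exact classOf_eq_of_profile_eq A w (by omega) hpeq
      have hUW : Fm = U := descC_eq_of_level A w hDesc (hFmW ▸ hW) hU
      rw [← hUW, hFmW]
      rw [hWC]
      exact profLE_of_profile_le A w (Or.inr rfl)
  refine ⟨main, ?_⟩
  intro hLT Fm j hFirst hDesc
  have hle := main Fm j hFirst hDesc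
  obtain ⟨a, ha, _, hUC⟩ := hU
  obtain ⟨b, hb, _, hWC⟩ := id hW
  have h1 : lexLT (profile A w a) (profile A w b) :=
    hLT a (hUC ▸ self_mem_classOf A w ha) b (hWC ▸ self_mem_classOf A w hb)
  have h2 : lexLE (profile A w b) (profile A w a) :=
    hle b (hWC ▸ self_mem_classOf A w hb) a (hUC ▸ self_mem_classOf A w ha)
  exact lexLT_asymm h1 h2
end
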